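/- Exogenization preserves marginal models: if D is a DAG with vertices V ∪ {u} and r(D,u) is the exogenized DAG at u, then M(D, V) = M(r(D,u), V). -/

import Mathlib

/-- A witness that the distribution `P` of the observed variables (indexed by `V`) lies in
the marginal DAG model `M(D, V)` of the DAG `D` with edge relation `Edge` on vertex set
`V ⊕ U` (observed `V`, latent `U`): there are a probability space, latent state-spaces
`𝒴 u` (arbitrary measurable spaces), observed variables `X v`, latent variables `Y u` and
independent real-valued error variables `err w`, such that every variable is measurable with
respect to the σ-algebra generated by its graphical parents' variables and its own error
(the structural equation property for `D`), and the joint distribution of `(X v)_{v ∈ V}`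
is `P`. -/
structure MarginWitness {V U : Type} (Edge : V ⊕ U → V ⊕ U → Prop) (𝒳 : V → Type)
    [∀ v, MeasurableSpace (𝒳 v)] (P : MeasureTheory.Measure (∀ v, 𝒳 v)) where
  Ω : Type
  [mΩ : MeasurableSpace Ω]
  μ : MeasureTheory.Measure Ω
  prob : MeasureTheory.IsProbabilityMeasure μ
  X : ∀ v : V, Ω → 𝒳 v
  𝒴 : U → Type
  [m𝒴 : ∀ u, MeasurableSpace (𝒴 u)]
  Y : ∀ u : U, Ω → 𝒴 u
  err : V ⊕ U → Ω → ℝ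
  indep : ProbabilityTheory.iIndepFun err μ
  sep : ∀ w : V ⊕ U,
      Sum.elim (fun v => MeasurableSpace.comap (X v) inferInstance)
          (fun u => MeasurableSpace.comap (Y u) inferInstance) w ≤
        (⨆ p ∈ {p | Edge p w},
          Sum.elim (fun v => MeasurableSpace.comap (X v) inferInstance)
            (fun u => MeasurableSpace.comap (Y u) inferInstance) p) ⊔
          MeasurableSpace.comap (err w) inferInstance
  marg : MeasureTheory.Measure.map (fun ω v => X v ω) μ = P

/-- `P` lies in the marginal DAG model `M(D, V)`, where `D` has observed vertices `V` and
latent vertices `U`. -/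
def InMarginalModel {V U : Type} (Edge : V ⊕ U → V ⊕ U → Prop) (𝒳 : V → Type)
    [∀ v, MeasurableSpace (𝒳 v)] (P : MeasureTheory.Measure (∀ v, 𝒳 v)) : Prop :=
  Nonempty (MarginWitness Edge 𝒳 P)

/-- The edge relation of the exogenized DAG `r(D, u)` for the latent vertex `u = Sum.inr ()`:
all edges into `u` are deleted, and every parent of `u` is joined to every child of `u`. -/
def exogenizedEdge {V : Type} (Edge : V ⊕ Unit → V ⊕ Unit → Prop)
    (a b : V ⊕ Unit) : Prop :=
  b ≠ Sum.inr () ∧ (Edge a b ∨ (Edge a (Sum.inr ()) ∧ Edge (Sum.inr ()) b))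

section ExoAux

open MeasurableSpace

lemma exo_comap_comp_le {α β γ : Type*} {mβ : MeasurableSpace β} {mγ : MeasurableSpace γ}
    (f : α → β) (g : β → γ) (hg : Measurable g) :
    MeasurableSpace.comap (fun a => g (f a)) mγ ≤ MeasurableSpace.comap f mβ := by
  rw [show (fun a => g (f a)) = g ∘ f from rfl, ← MeasurableSpace.comap_comp]
  exact MeasurableSpace.comap_mono hg.comap_le

lemma exo_comap_pair_le {α β γ : Type*} [mβ : MeasurableSpace β] [mγ : MeasurableSpace γ]
    (f : α → β) (g : α → γ) :
    MeasurableSpace.comap (fun a => (f a, g a)) inferInstance ≤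
      MeasurableSpace.comap f mβ ⊔ MeasurableSpace.comap g mγ := by
  rw [show (inferInstance : MeasurableSpace (β × γ)) =
        mβ.comap Prod.fst ⊔ mγ.comap Prod.snd from rfl,
    MeasurableSpace.comap_sup, MeasurableSpace.comap_comp, MeasurableSpace.comap_comp]
  exact le_rfl

lemma exo_comap_pi_le {α ι : Type*} {π : ι → Type*} [m : ∀ i, MeasurableSpace (π i)]
    (f : ∀ i, α → π i) :
    MeasurableSpace.comap (fun a i => f i a) MeasurableSpace.pi ≤
      ⨆ i, MeasurableSpace.comap (f i) (m i) := by
  rw [MeasurableSpace.pi, MeasurableSpace.comap_iSup]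
  exact iSup_mono fun i => le_of_eq MeasurableSpace.comap_comp

end ExoAux

/-- Exogenization preserves marginal models: if `D` is a DAG with vertices `V ∪ {u}` (the
latent vertex `u` being `Sum.inr ()`) and `r(D, u)` is the exogenized DAG at `u`, then
`M(D, V) = M(r(D, u), V)`. -/
theorem stmt7 {V : Type} [Fintype V] (Edge : V ⊕ Unit → V ⊕ Unit → Prop)
    (hacyclic : ∀ w, ¬ Relation.TransGen Edge w w)
    (𝒳 : V → Type) [∀ v, MeasurableSpace (𝒳 v)]
    (P : MeasureTheory.Measure (∀ v, 𝒳 v)) :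
    InMarginalModel Edge 𝒳 P ↔ InMarginalModel (exogenizedEdge Edge) 𝒳 P := by
  constructor
  · rintro ⟨W⟩
    letI := W.mΩ
    letI := W.m𝒴
    refine ⟨{ Ω := W.Ω, mΩ := W.mΩ, μ := W.μ, prob := W.prob, X := W.X,
              𝒴 := fun _ => ℝ, m𝒴 := fun _ => inferInstance,
              Y := fun _ => W.err (Sum.inr ()),
              err := W.err, indep := W.indep, marg := W.marg, sep := ?_ }⟩
    rintro (v | u)
    · refine (W.sep (Sum.inl v)).trans (sup_le_sup_right ?_ _)
      refine iSup₂_le fun p hp => ?_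
      rcases p with v' | u'
      · exact le_iSup₂_of_le (Sum.inl v') ⟨fun h => Sum.inl_ne_inr h, Or.inl hp⟩ le_rfl
      · refine (W.sep (Sum.inr ())).trans ?_
        refine sup_le (iSup₂_le fun q hq => ?_)
          (le_iSup₂_of_le (Sum.inr ()) ⟨fun h => Sum.inl_ne_inr h, Or.inl hp⟩ le_rfl)
        rcases q with v'' | u''
        · exact le_iSup₂_of_le (Sum.inl v'')
            ⟨fun h => Sum.inl_ne_inr h, Or.inr ⟨hq, hp⟩⟩ le_rfl
        · exact absurd (Relation.TransGen.single hq) (hacyclic _)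
    · exact le_sup_right
  · rintro ⟨W⟩
    letI := W.mΩ
    letI := W.m𝒴
    let T : V ⊕ Unit → Type := Sum.elim 𝒳 W.𝒴
    letI mT : ∀ q, MeasurableSpace (T q) := fun q =>
      Sum.rec (motive := fun q => MeasurableSpace (T q))
        (fun v => (inferInstance : MeasurableSpace (𝒳 v)))
        (fun u => W.m𝒴 u) q
    let Z : ∀ q, W.Ω → T q := fun q =>
      match q with
      | Sum.inl v => W.X v
      | Sum.inr u => W.Y u
    -- the latent state at u is replaced by the tuple of the parents' variables and Y u
    let Y' : W.Ω → (∀ q : {q // Edge q (Sum.inr ())}, T q.1) × W.𝒴 () :=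
      fun ω => (fun q => Z q.1 ω, W.Y () ω)
    have hYle : MeasurableSpace.comap (W.Y ()) inferInstance ≤
        MeasurableSpace.comap (W.err (Sum.inr ())) inferInstance := by
      refine (W.sep (Sum.inr ())).trans (sup_le ?_ le_rfl)
      exact (iSup₂_le fun p hp => absurd rfl hp.1).trans bot_le
    have hcomp1 : ∀ q : {q // Edge q (Sum.inr ())},
        MeasurableSpace.comap (Z q.1) (mT q.1) ≤ MeasurableSpace.comap Y' inferInstance :=
      fun q => exo_comap_comp_le Y' (fun t => t.1 q) ((measurable_pi_apply q).comp measurable_fst)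
    have hcomp2 : MeasurableSpace.comap (W.Y ()) inferInstance ≤
        MeasurableSpace.comap Y' inferInstance :=
      exo_comap_comp_le Y' Prod.snd measurable_snd
    refine ⟨{ Ω := W.Ω, mΩ := W.mΩ, μ := W.μ, prob := W.prob, X := W.X,
              𝒴 := fun _ => (∀ q : {q // Edge q (Sum.inr ())}, T q.1) × W.𝒴 (),
              m𝒴 := fun _ => inferInstance,
              Y := fun _ => Y',
              err := W.err, indep := W.indep, marg := W.marg, sep := ?_ }⟩
    rintro (v | u)
    · refine (W.sep (Sum.inl v)).trans (sup_le_sup_right ?_ _)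
      refine iSup₂_le fun p hp => ?_
      rcases hp.2 with h | ⟨h1, h2⟩
      · rcases p with v' | u'
        · exact le_iSup₂_of_le (Sum.inl v') h le_rfl
        · exact le_iSup₂_of_le (Sum.inr ()) h hcomp2
      · refine le_iSup₂_of_le (Sum.inr ()) h2 ?_
        rcases p with v' | u'
        · exact hcomp1 ⟨Sum.inl v', h1⟩
        · exact hcomp2
    · refine (exo_comap_pair_le _ _).trans (sup_le ?_ (hYle.trans le_sup_right))
      refine (exo_comap_pi_le _).trans (iSup_le fun q => ?_)
      rcases q with ⟨v' | u', hq⟩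
      · exact le_sup_of_le_left (le_iSup₂_of_le (Sum.inl v') hq le_rfl)
      · exact absurd (Relation.TransGen.single hq) (hacyclic _)
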